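/- arXiv:0903.3726 — 2 statements merged into one kernel-verified Lean document; each statement's English description precedes it below -/
import Mathlib

section
/- Let 1 ≤ i ≤ n−1 and 1 ≤ k ≤ h < l ≤ n with h ≤ i. Then in the set whose minimum defines α_i, all terms R_{i+1}−R_j+d_j corresponding to indices k ≤ j ≤ h may be replaced by the single term R_{i+1} − R_{h+1} + α'_{h−k+1}(k,l) without changing the minimum. In particular (taking k = 1, l = n), all terms with 1 ≤ j ≤ h may be replaced by R_{i+1} − R_{h+1} + α_h. -/
/-!
Combinatorial setting abstracting a good BONG over a dyadic local field.
`R : ℕ → ℤ` are the orders `R_i = ord a_i` (indices `1,…,n` used),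
`d : ℕ → EReal` are the values `d_j = d(-a_j a_{j+1}) ∈ ℕ ∪ {∞}`
(the allowed values are encoded in condition (G3) below).
-/

/-- The term `(R_{i+1} - R_i)/2 + e` appearing in the definition of `α_i`. -/
noncomputable def halfTerm (e : ℤ) (R : ℕ → ℤ) (i : ℕ) : EReal :=
  (((R (i + 1) - R i : ℝ) / 2 + (e : ℝ) : ℝ) : EReal)

/-- The set whose minimum defines `α_i`. -/
noncomputable def alphaSet (e : ℤ) (n : ℕ) (R : ℕ → ℤ) (d : ℕ → EReal) (i : ℕ) :
    Set EReal :=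
  {halfTerm e R i}
    ∪ {x | ∃ j, 1 ≤ j ∧ j ≤ i ∧ x = ((R (i + 1) - R j : ℝ) : EReal) + d j}
    ∪ {x | ∃ j, i ≤ j ∧ j + 1 ≤ n ∧ x = ((R (j + 1) - R i : ℝ) : EReal) + d j}

/-- The invariant `α_i = α_i(L)`, for `1 ≤ i ≤ n - 1`. -/
noncomputable def alpha (e : ℤ) (n : ℕ) (R : ℕ → ℤ) (d : ℕ → EReal) (i : ℕ) : EReal :=
  sInf (alphaSet e n R d i)

/-- `α'_m(k,l)`: the `α`-invariant of the truncated data `R_k,…,R_l`, `d_k,…,d_{l-1}`. -/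
noncomputable def alphaT (e : ℤ) (R : ℕ → ℤ) (d : ℕ → EReal) (k l m : ℕ) : EReal :=
  alpha e (l - k + 1) (fun j => R (k + j - 1)) (fun j => d (k + j - 1)) m

/-- Conditions (G1)-(G4) on the data `(e, n, R, d)`, abstracting a good BONG. -/
structure GoodBONG (e : ℤ) (n : ℕ) (R : ℕ → ℤ) (d : ℕ → EReal) : Prop where
  he : 1 ≤ e
  hn : 2 ≤ n
  g1 : ∀ i, 1 ≤ i → i + 2 ≤ n → R i ≤ R (i + 2)
  g2a : ∀ j, 1 ≤ j → j + 1 ≤ n → 0 ≤ R (j + 1) - R j + 2 * e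
  g2b : ∀ j, 1 ≤ j → j + 1 ≤ n → 0 ≤ ((R (j + 1) - R j : ℝ) : EReal) + d j
  g3 : ∀ j, 1 ≤ j → j + 1 ≤ n →
    d j = 0 ∨ (∃ m : ℕ, Odd m ∧ (m : ℤ) ≤ 2 * e - 1 ∧ d j = ((m : ℝ) : EReal)) ∨
      d j = (((2 * e : ℤ) : ℝ) : EReal) ∨ d j = ⊤
  g4odd : ∀ j, 1 ≤ j → j + 1 ≤ n → Odd (R (j + 1) - R j) →
    0 < R (j + 1) - R j ∧ d j = 0
  g4even : ∀ j, 1 ≤ j → j + 1 ≤ n → Even (R (j + 1) - R j) → 0 < d j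

/- auxiliary EReal lemmas -/

lemma my_neg_coe_add_coe_add (c : ℝ) (x : EReal) :
    ((-c : ℝ) : EReal) + ((c : ℝ) + x) = x := by
  induction x using EReal.rec with
  | bot => simp [EReal.add_bot]
  | top => rw [EReal.coe_add_top, EReal.coe_add_top]
  | coe r => rw [← EReal.coe_add, ← EReal.coe_add]; norm_num

lemma my_coe_add_coe_add (a b : ℝ) (x : EReal) :
    (a : EReal) + ((b : EReal) + x) = ((a + b : ℝ) : EReal) + x := by
  rw [← add_assoc, ← EReal.coe_add]

lemma my_add_right_mono {a b : ℝ} (h : a ≤ b) (x : EReal) :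
    (a : EReal) + x ≤ (b : EReal) + x :=
  add_le_add_left (EReal.coe_le_coe_iff.2 h) x

lemma my_le_coe_add_sInf (c : ℝ) (S : Set EReal) (u : EReal)
    (h : ∀ t ∈ S, u ≤ (c : EReal) + t) : u ≤ (c : EReal) + sInf S := by
  have h1 : ((-c : ℝ) : EReal) + u ≤ sInf S := by
    refine le_sInf fun t ht => ?_
    calc ((-c : ℝ) : EReal) + u ≤ ((-c : ℝ) : EReal) + ((c : EReal) + t) :=
          add_le_add_right (h t ht) _
      _ = t := my_neg_coe_add_coe_add c t
  have h2 : (c : EReal) + (((-c : ℝ) : EReal) + u) = u := by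
    have := my_neg_coe_add_coe_add (-c) u
    rwa [neg_neg] at this
  calc u = (c : EReal) + (((-c : ℝ) : EReal) + u) := h2.symm
    _ ≤ (c : EReal) + sInf S := add_le_add_right h1 _

/- the chain lemma from (G1) -/

lemma chain_sum {e : ℤ} {n : ℕ} {R : ℕ → ℤ} {d : ℕ → EReal}
    (H : GoodBONG e n R d) :
    ∀ b a : ℕ, 1 ≤ a → a ≤ b → b + 1 ≤ n → R a + R (a + 1) ≤ R b + R (b + 1) := by
  intro b
  induction b with
  | zero => intro a h1 h2 _; omega
  | succ b ih =>
    intro a h1 h2 h3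
    rcases Nat.lt_or_ge a (b + 1) with hlt | hge
    · have h5 := ih a h1 (by omega) (by omega)
      have h6 : R b ≤ R (b + 2) := H.g1 b (by omega) (by omega)
      have h7 : b + 1 + 1 = b + 2 := by omega
      rw [h7]
      omega
    · have : a = b + 1 := by omega
      subst this
      exact le_refl _

/- the main auxiliary statement: part 1 of stmt5 -/

theorem stmt5_part1 (e : ℤ) (n : ℕ) (R : ℕ → ℤ) (d : ℕ → EReal)
    (H : GoodBONG e n R d) (i k h l : ℕ)
    (hi : 1 ≤ i) (hin : i + 1 ≤ n) (hk : 1 ≤ k) (hkh : k ≤ h) (hhl : h < l)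
    (hln : l ≤ n) (hhi : h ≤ i) :
    alpha e n R d i =
      sInf ({halfTerm e R i}
        ∪ {x | ∃ j, 1 ≤ j ∧ j ≤ i ∧ (j < k ∨ h < j) ∧
            x = ((R (i + 1) - R j : ℝ) : EReal) + d j}
        ∪ {((R (i + 1) - R (h + 1) : ℝ) : EReal) + alphaT e R d k l (h - k + 1)}
        ∪ {x | ∃ j, i ≤ j ∧ j + 1 ≤ n ∧ x = ((R (j + 1) - R i : ℝ) : EReal) + d j}) := by
  have hh1 : 1 ≤ h := hk.trans hkh
  have hchain_hi : R h + R (h + 1) ≤ R i + R (i + 1) := chain_sum H i h hh1 hhi hin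
  set m : ℕ := h - k + 1 with hm
  have hkm : k + m - 1 = h := by omega
  have hkm1 : k + (m + 1) - 1 = h + 1 := by omega
  -- the truncated alpha set
  set R' : ℕ → ℤ := fun j => R (k + j - 1) with hR'
  set d' : ℕ → EReal := fun j => d (k + j - 1) with hd'
  have hT : alphaT e R d k l m = sInf (alphaSet e (l - k + 1) R' d' m) := rfl
  -- half term of the truncated set
  have hhalf' : halfTerm e R' m = (((R (h + 1) - R h : ℝ) / 2 + (e : ℝ) : ℝ) : EReal) := by
    simp only [halfTerm, hR', hkm, hkm1]
  -- description of membership in the truncated set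
  have hdesc : ∀ t ∈ alphaSet e (l - k + 1) R' d' m,
      t = (((R (h + 1) - R h : ℝ) / 2 + (e : ℝ) : ℝ) : EReal) ∨
      (∃ j', k ≤ j' ∧ j' ≤ h ∧ t = ((R (h + 1) - R j' : ℝ) : EReal) + d j') ∨
      (∃ j', h ≤ j' ∧ j' + 1 ≤ l ∧ t = ((R (j' + 1) - R h : ℝ) : EReal) + d j') := by
    intro t ht
    simp only [alphaSet, Set.mem_union, Set.mem_singleton_iff, Set.mem_setOf_eq] at ht
    rcases ht with (ht | ⟨j, hj1, hj2, hj3⟩) | ⟨j, hj1, hj2, hj3⟩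
    · left; rw [ht, hhalf']
    · right; left
      refine ⟨k + j - 1, by omega, by omega, ?_⟩
      rw [hj3]
      simp only [hR', hd', hkm1]
    · right; right
      refine ⟨k + j - 1, by omega, by omega, ?_⟩
      rw [hj3]
      simp only [hR', hd', hkm]
      have : k + (j + 1) - 1 = k + j - 1 + 1 := by omega
      rw [this]
  -- middle terms with k ≤ j ≤ h belong to the truncated set
  have hmem' : ∀ j, k ≤ j → j ≤ h →
      ((R (h + 1) - R j : ℝ) : EReal) + d j ∈ alphaSet e (l - k + 1) R' d' m := by
    intro j hj1 hj2
    simp only [alphaSet, Set.mem_union, Set.mem_singleton_iff, Set.mem_setOf_eq]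
    left; right
    refine ⟨j - k + 1, by omega, by omega, ?_⟩
    simp only [hR', hd', hkm1]
    have : k + (j - k + 1) - 1 = j := by omega
    rw [this]
  -- the key sum identity
  have hsum : ∀ (a : ℝ) (b : EReal), ((R (i + 1) - R (h + 1) : ℝ) : EReal) + (((a : ℝ) : EReal) + b) =
      (((R (i + 1) - R (h + 1) : ℝ) + a : ℝ) : EReal) + b := fun a b =>
    my_coe_add_coe_add _ _ _
  apply le_antisymm
  · -- alpha ≤ sInf B
    refine le_sInf fun x hx => ?_
    simp only [Set.mem_union, Set.mem_singleton_iff, Set.mem_setOf_eq] at hx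
    rcases hx with ((hx | ⟨j, hj1, hj2, _, hj4⟩) | hx) | ⟨j, hj1, hj2, hj3⟩
    · exact sInf_le (Or.inl (Or.inl hx))
    · exact sInf_le (Or.inl (Or.inr ⟨j, hj1, hj2, hj4⟩))
    · -- x = c + alphaT : use the inf description
      rw [hx, hT]
      refine my_le_coe_add_sInf _ _ _ fun t ht => ?_
      rcases hdesc t ht with ht1 | ⟨j', hj1, hj2, ht1⟩ | ⟨j', hj1, hj2, ht1⟩
      · -- half term of truncated set
        subst ht1
        have hmemA : halfTerm e R i ∈ alphaSet e n R d i := Or.inl (Or.inl rfl)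
        refine le_trans (sInf_le hmemA) ?_
        rw [show (((R (i + 1) - R (h + 1) : ℝ) : EReal) +
              (((R (h + 1) - R h : ℝ) / 2 + (e : ℝ) : ℝ) : EReal)) =
              (((R (i + 1) - R (h + 1) : ℝ) + ((R (h + 1) - R h : ℝ) / 2 + (e : ℝ)) : ℝ)
                : EReal) from (EReal.coe_add _ _).symm]
        rw [halfTerm, EReal.coe_le_coe_iff]
        have : (R h : ℝ) + R (h + 1) ≤ (R i : ℝ) + R (i + 1) := by exact_mod_cast hchain_hi
        linarith
      · -- middle term: the removed term itself
        subst ht1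
        rw [hsum]
        rw [show (R (i + 1) - R (h + 1) : ℝ) + (R (h + 1) - R j' : ℝ) =
            (R (i + 1) - R j' : ℝ) from by push_cast; ring]
        exact sInf_le (Or.inl (Or.inr ⟨j', by omega, by omega, rfl⟩))
      · -- right term of truncated set
        subst ht1
        rw [hsum]
        rcases Nat.lt_or_ge j' i with hj' | hj'
        · -- h ≤ j' < i : compare with the middle term for j'
          have hch : R h + R (h + 1) ≤ R j' + R (j' + 1) :=
            chain_sum H j' h hh1 hj1 (by omega)
          have hmemA : ((R (i + 1) - R j' : ℝ) : EReal) + d j' ∈ alphaSet e n R d i :=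
            Or.inl (Or.inr ⟨j', by omega, by omega, rfl⟩)
          refine le_trans (sInf_le hmemA) (my_add_right_mono ?_ (d j'))
          have : (R h : ℝ) + R (h + 1) ≤ (R j' : ℝ) + R (j' + 1) := by exact_mod_cast hch
          push_cast
          linarith
        · -- i ≤ j' : compare with the right term for j'
          have hmemA : ((R (j' + 1) - R i : ℝ) : EReal) + d j' ∈ alphaSet e n R d i :=
            Or.inr ⟨j', hj', by omega, rfl⟩
          refine le_trans (sInf_le hmemA) (my_add_right_mono ?_ (d j'))
          have : (R h : ℝ) + R (h + 1) ≤ (R i : ℝ) + R (i + 1) := by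
            exact_mod_cast hchain_hi
          push_cast
          linarith
    · exact sInf_le (Or.inr ⟨j, hj1, hj2, hj3⟩)
  · -- sInf B ≤ alpha
    refine le_sInf fun x hx => ?_
    simp only [alphaSet, Set.mem_union, Set.mem_singleton_iff, Set.mem_setOf_eq] at hx
    rcases hx with (hx | ⟨j, hj1, hj2, hj3⟩) | ⟨j, hj1, hj2, hj3⟩
    · exact sInf_le (Or.inl (Or.inl (Or.inl hx)))
    · rcases Nat.lt_or_ge j k with hjk | hjk
      · -- j < k : kept term
        exact sInf_le (Or.inl (Or.inl (Or.inr ⟨j, hj1, hj2, Or.inl hjk, hj3⟩)))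
      · rcases Nat.lt_or_ge h j with hhj | hhj
        · -- h < j : kept term
          exact sInf_le (Or.inl (Or.inl (Or.inr ⟨j, hj1, hj2, Or.inr hhj, hj3⟩)))
        · -- k ≤ j ≤ h : removed term, bounded below by c + alphaT
          have hmem := hmem' j hjk hhj
          have h1 : sInf ({halfTerm e R i}
              ∪ {x | ∃ j, 1 ≤ j ∧ j ≤ i ∧ (j < k ∨ h < j) ∧
                  x = ((R (i + 1) - R j : ℝ) : EReal) + d j}
              ∪ {((R (i + 1) - R (h + 1) : ℝ) : EReal) + alphaT e R d k l (h - k + 1)}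
              ∪ {x | ∃ j, i ≤ j ∧ j + 1 ≤ n ∧
                  x = ((R (j + 1) - R i : ℝ) : EReal) + d j}) ≤
              ((R (i + 1) - R (h + 1) : ℝ) : EReal) + alphaT e R d k l (h - k + 1) :=
            sInf_le (Or.inl (Or.inr rfl))
          refine le_trans h1 ?_
          rw [hT]
          have h2 : sInf (alphaSet e (l - k + 1) R' d' m) ≤
              ((R (h + 1) - R j : ℝ) : EReal) + d j := sInf_le hmem
          refine le_trans (add_le_add_right h2 _) ?_
          rw [hsum]
          rw [show (R (i + 1) - R (h + 1) : ℝ) + (R (h + 1) - R j : ℝ) =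
              (R (i + 1) - R j : ℝ) from by push_cast; ring]
          rw [hj3]
    · exact sInf_le (Or.inr ⟨j, hj1, hj2, hj3⟩)

/-- for `1 ≤ i ≤ n-1` and `1 ≤ k ≤ h < l ≤ n` with `h ≤ i`, in the set
defining `α_i` all terms `R_{i+1} - R_j + d_j` with `k ≤ j ≤ h` may be replaced by the
single term `R_{i+1} - R_{h+1} + α'_{h-k+1}(k,l)`. In particular (for `k = 1`, `l = n`)
all terms with `1 ≤ j ≤ h` may be replaced by `R_{i+1} - R_{h+1} + α_h`. -/
theorem stmt5 (e : ℤ) (n : ℕ) (R : ℕ → ℤ) (d : ℕ → EReal)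
    (H : GoodBONG e n R d) (i k h l : ℕ)
    (hi : 1 ≤ i) (hin : i + 1 ≤ n) (hk : 1 ≤ k) (hkh : k ≤ h) (hhl : h < l)
    (hln : l ≤ n) (hhi : h ≤ i) :
    alpha e n R d i =
      sInf ({halfTerm e R i}
        ∪ {x | ∃ j, 1 ≤ j ∧ j ≤ i ∧ (j < k ∨ h < j) ∧
            x = ((R (i + 1) - R j : ℝ) : EReal) + d j}
        ∪ {((R (i + 1) - R (h + 1) : ℝ) : EReal) + alphaT e R d k l (h - k + 1)}
        ∪ {x | ∃ j, i ≤ j ∧ j + 1 ≤ n ∧ x = ((R (j + 1) - R i : ℝ) : EReal) + d j}) ∧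
    alpha e n R d i =
      sInf ({halfTerm e R i}
        ∪ {x | ∃ j, h < j ∧ j ≤ i ∧ x = ((R (i + 1) - R j : ℝ) : EReal) + d j}
        ∪ {((R (i + 1) - R (h + 1) : ℝ) : EReal) + alpha e n R d h}
        ∪ {x | ∃ j, i ≤ j ∧ j + 1 ≤ n ∧ x = ((R (j + 1) - R i : ℝ) : EReal) + d j}) := by
  have hh1 : 1 ≤ h := hk.trans hkh
  refine ⟨stmt5_part1 e n R d H i k h l hi hin hk hkh hhl hln hhi, ?_⟩
  have P1 := stmt5_part1 e n R d H i 1 h n hi hin le_rfl hh1 (by omega) le_rfl hhi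
  have hTeq : alphaT e R d 1 n (h - 1 + 1) = alpha e n R d h := by
    unfold alphaT
    have e1 : h - 1 + 1 = h := by omega
    have e2 : n - 1 + 1 = n := by omega
    have e3 : (fun j => R (1 + j - 1)) = R := funext fun j => by congr 1; omega
    have e4 : (fun j => d (1 + j - 1)) = d := funext fun j => by congr 1; omega
    rw [e1, e2, e3, e4]
  rw [hTeq] at P1
  rw [P1]
  congr 2
  ext x
  simp only [Set.mem_union, Set.mem_singleton_iff, Set.mem_setOf_eq]
  constructor
  · rintro ((h1 | ⟨j, hj1, hj2, hj3, hj4⟩) | h1)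
    · exact Or.inl (Or.inl h1)
    · rcases hj3 with hj3 | hj3
      · omega
      · exact Or.inl (Or.inr ⟨j, hj3, hj2, hj4⟩)
    · exact Or.inr h1
  · rintro ((h1 | ⟨j, hj1, hj2, hj3⟩) | h1)
    · exact Or.inl (Or.inl h1)
    · exact Or.inl (Or.inr ⟨j, by omega, hj2, Or.inr hj1, hj3⟩)
    · exact Or.inr h1
end

section
/- For any 1 ≤ i ≤ n−1 one has the recursive formula α_i = min{ (R_{i+1}−R_i)/2 + e, R_{i+1}−R_i+d_i, R_{i+1}−R_i+α_{i−1}, R_{i+1}−R_i+α_{i+1} }, where the term R_{i+1}−R_i+α_{i−1} is omitted when i = 1 and the term R_{i+1}−R_i+α_{i+1} is omitted when i = n−1. -/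
private lemma mem_half (e : ℤ) (n : ℕ) (R : ℕ → ℤ) (d : ℕ → EReal) (i : ℕ) :
    halfTerm e R i ∈ alphaSet e n R d i := Or.inl (Or.inl rfl)

private lemma mem_B (e : ℤ) (n : ℕ) (R : ℕ → ℤ) (d : ℕ → EReal) {i j : ℕ}
    (h1 : 1 ≤ j) (h2 : j ≤ i) :
    ((R (i + 1) - R j : ℝ) : EReal) + d j ∈ alphaSet e n R d i :=
  Or.inl (Or.inr ⟨j, h1, h2, rfl⟩)

private lemma mem_C (e : ℤ) (n : ℕ) (R : ℕ → ℤ) (d : ℕ → EReal) {i j : ℕ}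
    (h1 : i ≤ j) (h2 : j + 1 ≤ n) :
    ((R (j + 1) - R i : ℝ) : EReal) + d j ∈ alphaSet e n R d i :=
  Or.inr ⟨j, h1, h2, rfl⟩

private lemma alphaSet_finite (e : ℤ) (n : ℕ) (R : ℕ → ℤ) (d : ℕ → EReal) (i : ℕ) :
    (alphaSet e n R d i).Finite := by
  refine Set.Finite.union (Set.Finite.union (Set.finite_singleton _) ?_) ?_
  · exact Set.Finite.subset ((Set.finite_Icc 1 i).image
      (fun j => ((R (i + 1) - R j : ℝ) : EReal) + d j))
      (by rintro x ⟨j, h1, h2, rfl⟩; exact ⟨j, Set.mem_Icc.mpr ⟨h1, h2⟩, rfl⟩)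
  · exact Set.Finite.subset ((Set.finite_Icc i n).image
      (fun j => ((R (j + 1) - R i : ℝ) : EReal) + d j))
      (by rintro x ⟨j, h1, h2, rfl⟩; exact ⟨j, Set.mem_Icc.mpr ⟨h1, by omega⟩, rfl⟩)

private lemma alpha_mem (e : ℤ) (n : ℕ) (R : ℕ → ℤ) (d : ℕ → EReal) (i : ℕ) :
    alpha e n R d i ∈ alphaSet e n R d i :=
  Set.Nonempty.csInf_mem ⟨_, mem_half e n R d i⟩ (alphaSet_finite e n R d i)

private lemma alpha_le {e : ℤ} {n : ℕ} {R : ℕ → ℤ} {d : ℕ → EReal} {i : ℕ} {x : EReal}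
    (hx : x ∈ alphaSet e n R d i) : alpha e n R d i ≤ x := sInf_le hx

private lemma key_le (a b : ℝ) (t : EReal) (hab : a ≤ b) : (a:EReal) + t ≤ (b:EReal) + t :=
  add_le_add_left (EReal.coe_le_coe_iff.mpr hab) t

private lemma add_shift (c x : ℝ) (t : EReal) :
    (c:EReal) + ((x:EReal) + t) = ((c + x : ℝ):EReal) + t := by
  rw [← add_assoc, ← EReal.coe_add]

/-- the recursive formula
`α_i = min{(R_{i+1}-R_i)/2+e, R_{i+1}-R_i+d_i, R_{i+1}-R_i+α_{i-1}, R_{i+1}-R_i+α_{i+1}}`,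
where the third term is omitted when `i = 1` and the fourth when `i = n-1`. -/
theorem stmt7 (e : ℤ) (n : ℕ) (R : ℕ → ℤ) (d : ℕ → EReal)
    (h : GoodBONG e n R d) (i : ℕ) (hi : 1 ≤ i) (hin : i + 1 ≤ n) :
    alpha e n R d i =
      sInf ({halfTerm e R i, ((R (i + 1) - R i : ℝ) : EReal) + d i}
        ∪ {x | 2 ≤ i ∧ x = ((R (i + 1) - R i : ℝ) : EReal) + alpha e n R d (i - 1)}
        ∪ {x | i + 2 ≤ n ∧ x = ((R (i + 1) - R i : ℝ) : EReal) + alpha e n R d (i + 1)}) := by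
  have hg1 := h.g1
  apply le_antisymm
  · apply le_sInf
    rintro x (((rfl | rfl) | ⟨h2i, rfl⟩) | ⟨h2n, rfl⟩)
    · exact alpha_le (mem_half e n R d i)
    · exact alpha_le (mem_C e n R d le_rfl hin)
    · -- α_i ≤ c + α_{i-1}
      have hR : (R (i - 1) : ℝ) ≤ (R (i + 1) : ℝ) := by
        have := hg1 (i - 1) (by omega) (by omega)
        rw [show i - 1 + 2 = i + 1 from by omega] at this
        exact_mod_cast this
      rcases alpha_mem e n R d (i - 1) with ((hm | ⟨j, hj1, hj2, hm⟩) | ⟨j, hj1, hj2, hm⟩)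
      · rw [hm]
        refine le_trans (alpha_le (mem_half e n R d i)) ?_
        rw [halfTerm, halfTerm, ← EReal.coe_add, EReal.coe_le_coe_iff,
          show i - 1 + 1 = i from by omega]
        linarith
      · rw [hm, add_shift,
          show ((R (i + 1) - R i : ℝ) + (R (i - 1 + 1) - R j : ℝ)) = (R (i + 1) - R j : ℝ) from by
            rw [show i - 1 + 1 = i from by omega]; ring]
        exact alpha_le (mem_B e n R d hj1 (by omega))
      · rcases Nat.lt_or_ge j i with hji | hji
        · have hj : j = i - 1 := by omega
          subst hj
          rw [hm, add_shift,
            show ((R (i + 1) - R i : ℝ) + (R (i - 1 + 1) - R (i - 1) : ℝ))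
                = (R (i + 1) - R (i - 1) : ℝ) from by
              rw [show i - 1 + 1 = i from by omega]; ring]
          exact alpha_le (mem_B e n R d (by omega) (by omega))
        · rw [hm, add_shift]
          refine le_trans (alpha_le (mem_C e n R d hji hj2)) ?_
          refine key_le _ _ _ ?_
          have : (R (j + 1) : ℝ) - R (i - 1) ≥ (R (j + 1) : ℝ) - R (i + 1) := by linarith
          linarith
    · -- α_i ≤ c + α_{i+1}
      have hR : (R i : ℝ) ≤ (R (i + 2) : ℝ) := by exact_mod_cast hg1 i hi h2n
      rcases alpha_mem e n R d (i + 1) with ((hm | ⟨j, hj1, hj2, hm⟩) | ⟨j, hj1, hj2, hm⟩)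
      · rw [hm]
        refine le_trans (alpha_le (mem_half e n R d i)) ?_
        rw [halfTerm, halfTerm, ← EReal.coe_add, EReal.coe_le_coe_iff]
        have : (R (i + 1 + 1) : ℝ) = (R (i + 2) : ℝ) := by norm_num
        rw [this]; linarith
      · rcases Nat.lt_or_ge j (i + 1) with hji | hji
        · rw [hm, add_shift]
          refine le_trans (alpha_le (mem_B e n R d hj1 (by omega))) ?_
          refine key_le _ _ _ ?_
          have : (R (i + 1 + 1) : ℝ) = (R (i + 2) : ℝ) := by norm_num
          rw [this]; linarith
        · have hj : j = i + 1 := by omega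
          subst hj
          rw [hm, add_shift,
            show ((R (i + 1) - R i : ℝ) + (R (i + 1 + 1) - R (i + 1) : ℝ))
                = (R (i + 1 + 1) - R i : ℝ) from by ring]
          exact alpha_le (mem_C e n R d (by omega) (by omega))
      · rw [hm, add_shift,
          show ((R (i + 1) - R i : ℝ) + (R (j + 1) - R (i + 1) : ℝ))
              = (R (j + 1) - R i : ℝ) from by ring]
        exact alpha_le (mem_C e n R d (by omega) hj2)
  · apply le_sInf
    rintro x ((hx | ⟨j, hj1, hj2, rfl⟩) | ⟨j, hj1, hj2, rfl⟩)
    · rw [hx]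
      exact sInf_le (Or.inl (Or.inl (Set.mem_insert _ _)))
    · rcases Nat.lt_or_ge j i with hji | hji
      · -- j ≤ i - 1, use α_{i-1} term
        have h2i : 2 ≤ i := by omega
        refine le_trans (sInf_le (Or.inl (Or.inr ⟨h2i, rfl⟩))) ?_
        have h1 : alpha e n R d (i - 1) ≤ ((R (i - 1 + 1) - R j : ℝ) : EReal) + d j :=
          alpha_le (mem_B e n R d hj1 (by omega))
        calc ((R (i + 1) - R i : ℝ) : EReal) + alpha e n R d (i - 1)
            ≤ ((R (i + 1) - R i : ℝ) : EReal) + (((R (i - 1 + 1) - R j : ℝ) : EReal) + d j) :=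
              add_le_add_right h1 _
          _ = ((R (i + 1) - R j : ℝ) : EReal) + d j := by
              rw [add_shift, show ((R (i + 1) - R i : ℝ) + (R (i - 1 + 1) - R j : ℝ))
                = (R (i + 1) - R j : ℝ) from by rw [show i - 1 + 1 = i from by omega]; ring]
      · have hj : j = i := by omega
        subst hj
        exact sInf_le (Or.inl (Or.inl (Set.mem_insert_iff.mpr (Or.inr rfl))))
    · rcases Nat.lt_or_ge i j with hji | hji
      · have h2n : i + 2 ≤ n := by omega
        refine le_trans (sInf_le (Or.inr ⟨h2n, rfl⟩)) ?_
        have h1 : alpha e n R d (i + 1) ≤ ((R (j + 1) - R (i + 1) : ℝ) : EReal) + d j :=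
          alpha_le (mem_C e n R d (by omega) hj2)
        calc ((R (i + 1) - R i : ℝ) : EReal) + alpha e n R d (i + 1)
            ≤ ((R (i + 1) - R i : ℝ) : EReal) + (((R (j + 1) - R (i + 1) : ℝ) : EReal) + d j) :=
              add_le_add_right h1 _
          _ = ((R (j + 1) - R i : ℝ) : EReal) + d j := by
              rw [add_shift, show ((R (i + 1) - R i : ℝ) + (R (j + 1) - R (i + 1) : ℝ))
                = (R (j + 1) - R i : ℝ) from by ring]
      · have hj : j = i := by omega
        subst hj
        exact sInf_le (Or.inl (Or.inl (Set.mem_insert_iff.mpr (Or.inr rfl))))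
end
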